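/- arXiv:1808.10704 — 4 statements merged into one kernel-verified Lean document; each statement's English description precedes it below -/
import Mathlib

section
/- Let A be an n×n Metzler Hurwitz stable matrix, B ∈ ℝ^{n×m}, C ∈ ℝ^{m×n}, D ∈ ℝ^{m×m} entrywise nonnegative with ρ(D) < 1. If there exist strictly positive vectors p ∈ ℝ^n and q ∈ ℝ^m such that Ap + Bq ≺ 0 and Cp + (D - I)q ≺ 0 componentwise, then the spectral radius of C(-A)^{-1}B + D is strictly less than 1. -/
/-- If `M` has nonpositive off-diagonal entries, `p > 0`, `Mp > 0`, and `Mx ≥ 0`,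
then `x ≥ 0`. -/
lemma aux_key_nonneg {n : ℕ} (M : Matrix (Fin n) (Fin n) ℝ)
    (hM : ∀ i j, i ≠ j → M i j ≤ 0)
    (p : Fin n → ℝ) (hp : ∀ i, 0 < p i) (hMp : ∀ i, 0 < M.mulVec p i)
    (x : Fin n → ℝ) (hx : ∀ i, 0 ≤ M.mulVec x i) : ∀ i, 0 ≤ x i := by
  by_contra h
  push_neg at h
  obtain ⟨i1, hi1⟩ := h
  obtain ⟨i0, -, hmin⟩ := Finset.exists_min_image Finset.univ (fun i => x i / p i)
    ⟨i1, Finset.mem_univ i1⟩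
  set t := x i0 / p i0 with ht
  have hmin' : ∀ j, t ≤ x j / p j := fun j => hmin j (Finset.mem_univ j)
  have htneg : t < 0 := lt_of_le_of_lt (hmin' i1) (div_neg_of_neg_of_pos hi1 (hp i1))
  have hxt : ∀ j, t * p j ≤ x j := fun j => by
    have h' := hmin' j
    rw [le_div_iff₀ (hp j)] at h'
    linarith
  have hxi0 : x i0 = t * p i0 := by
    rw [ht, div_mul_cancel₀ _ (hp i0).ne']
  have hle : M.mulVec x i0 ≤ t * M.mulVec p i0 := by
    simp only [Matrix.mulVec, dotProduct]
    rw [Finset.mul_sum]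
    apply Finset.sum_le_sum
    intro j _
    by_cases hj : j = i0
    · subst hj
      rw [hxi0]; ring_nf; exact le_of_eq (by ring)
    · have hMij := hM i0 j (Ne.symm hj)
      have hxj := hxt j
      nlinarith
  nlinarith [hx i0, hMp i0]

/-- A nonnegative matrix `E` with `E q < q` for some `q > 0` has all complex
eigenvalues of modulus `< 1`. -/
lemma aux_spec_lt_one {m : ℕ} (E : Matrix (Fin m) (Fin m) ℝ)
    (hE : ∀ i j, 0 ≤ E i j) (q : Fin m → ℝ) (hq : ∀ j, 0 < q j)
    (hEq : ∀ j, E.mulVec q j < q j) :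
    ∀ μ ∈ spectrum ℂ (E.map Complex.ofReal), ‖μ‖ < 1 := by
  intro μ hμ
  rw [spectrum.mem_iff] at hμ
  have hdet : (algebraMap ℂ (Matrix (Fin m) (Fin m) ℂ) μ - E.map Complex.ofReal).det = 0 := by
    by_contra h
    exact hμ ((Matrix.isUnit_iff_isUnit_det _).mpr (Ne.isUnit h))
  obtain ⟨v, hv0, hv⟩ := Matrix.exists_mulVec_eq_zero_iff.mpr hdet
  have heig : (E.map Complex.ofReal).mulVec v = μ • v := by
    have : (algebraMap ℂ (Matrix (Fin m) (Fin m) ℂ) μ - E.map Complex.ofReal).mulVec v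
        = μ • v - (E.map Complex.ofReal).mulVec v := by
      rw [Matrix.sub_mulVec, Algebra.algebraMap_eq_smul_one, Matrix.smul_mulVec,
        Matrix.one_mulVec]
    rw [this] at hv
    linear_combination (norm := module) -hv
  set w : Fin m → ℝ := fun j => ‖v j‖ with hw
  have hwle : ∀ j, ‖μ‖ * w j ≤ E.mulVec w j := by
    intro j
    have h1 : ‖μ‖ * w j = ‖(E.map Complex.ofReal).mulVec v j‖ := by
      rw [heig]
      simp only [Pi.smul_apply, smul_eq_mul, norm_mul, hw]
    rw [h1]
    calc ‖(E.map Complex.ofReal).mulVec v j‖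
        = ‖∑ k, (E j k : ℂ) * v k‖ := by
          simp [Matrix.mulVec, dotProduct, Matrix.map_apply]
      _ ≤ ∑ k, ‖(E j k : ℂ) * v k‖ := norm_sum_le _ _
      _ = ∑ k, E j k * w k := by
          apply Finset.sum_congr rfl
          intro k _
          rw [norm_mul, Complex.norm_real, Real.norm_eq_abs, abs_of_nonneg (hE j k)]
      _ = E.mulVec w j := rfl
  obtain ⟨j1, hj1⟩ : ∃ j, v j ≠ 0 := by
    by_contra h
    push_neg at h
    exact hv0 (funext h)
  obtain ⟨j0, -, hmax⟩ := Finset.exists_max_image Finset.univ (fun j => w j / q j)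
    ⟨j1, Finset.mem_univ j1⟩
  set t := w j0 / q j0 with hts
  have hmax' : ∀ j, w j / q j ≤ t := fun j => hmax j (Finset.mem_univ j)
  have htpos : 0 < t := by
    have : 0 < w j1 / q j1 :=
      div_pos (by simp [hw, norm_pos_iff, hj1]) (hq j1)
    exact lt_of_lt_of_le this (hmax' j1)
  have hwt : ∀ j, w j ≤ t * q j := fun j => by
    have h' := hmax' j
    rw [div_le_iff₀ (hq j)] at h'
    linarith
  have hwj0 : w j0 = t * q j0 := by
    rw [hts, div_mul_cancel₀ _ (hq j0).ne']
  have hEwq : E.mulVec w j0 ≤ t * E.mulVec q j0 := by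
    simp only [Matrix.mulVec, dotProduct]
    rw [Finset.mul_sum]
    apply Finset.sum_le_sum
    intro k _
    have := hwt k
    nlinarith [hE j0 k]
  have hfin : ‖μ‖ * (t * q j0) < t * q j0 := by
    calc ‖μ‖ * (t * q j0) = ‖μ‖ * w j0 := by rw [hwj0]
      _ ≤ E.mulVec w j0 := hwle j0
      _ ≤ t * E.mulVec q j0 := hEwq
      _ < t * q j0 := by nlinarith [hEq j0]
  have hpos : 0 < t * q j0 := mul_pos htpos (hq j0)
  nlinarith

/-- If `A` is Metzler Hurwitz stable, `B, C, D` are nonnegative with `ρ(D) < 1`,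
and strictly positive `p, q` satisfy `Ap + Bq ≺ 0` and `Cp + (D - I)q ≺ 0`,
then `ρ(C(-A)⁻¹B + D) < 1`. -/
theorem spectralRadius_lt_one_of_vector_ineq
    {n m : ℕ} (A : Matrix (Fin n) (Fin n) ℝ) (B : Matrix (Fin n) (Fin m) ℝ)
    (C : Matrix (Fin m) (Fin n) ℝ) (D : Matrix (Fin m) (Fin m) ℝ)
    (hA : ∀ i j, i ≠ j → 0 ≤ A i j)
    (hAH : ∀ μ ∈ spectrum ℂ (A.map Complex.ofReal), μ.re < 0)
    (hB : ∀ i j, 0 ≤ B i j) (hC : ∀ i j, 0 ≤ C i j) (hD : ∀ i j, 0 ≤ D i j)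
    (hρD : ∀ μ ∈ spectrum ℂ (D.map Complex.ofReal), ‖μ‖ < 1)
    (p : Fin n → ℝ) (q : Fin m → ℝ)
    (hp : ∀ i, 0 < p i) (hq : ∀ j, 0 < q j)
    (h1 : ∀ i, A.mulVec p i + B.mulVec q i < 0)
    (h2 : ∀ j, C.mulVec p j + (D - 1).mulVec q j < 0) :
    ∀ μ ∈ spectrum ℂ ((C * (-A)⁻¹ * B + D).map Complex.ofReal), ‖μ‖ < 1 := by
  set M := -A with hMdef
  have hMoff : ∀ i j, i ≠ j → M i j ≤ 0 := fun i j hij => by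
    simpa [hMdef] using neg_nonpos_of_nonneg (hA i j hij)
  have hBq : ∀ i, 0 ≤ B.mulVec q i := by
    intro i
    simp only [Matrix.mulVec, dotProduct]
    exact Finset.sum_nonneg fun k _ => mul_nonneg (hB i k) (hq k).le
  have hMp : ∀ i, 0 < M.mulVec p i := by
    intro i
    have := h1 i
    have hBqi := hBq i
    have : -(A.mulVec p i) > 0 := by linarith
    simpa [hMdef, Matrix.neg_mulVec] using this
  -- invertibility of M = -A
  have hdet : M.det ≠ 0 := by
    intro h
    obtain ⟨v, hv0, hv⟩ := Matrix.exists_mulVec_eq_zero_iff.mpr h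
    have hv1 : ∀ i, 0 ≤ v i :=
      aux_key_nonneg M hMoff p hp hMp v (fun i => by rw [hv]; simp)
    have hv2 : ∀ i, 0 ≤ (-v) i :=
      aux_key_nonneg M hMoff p hp hMp (-v) (fun i => by
        rw [Matrix.mulVec_neg, hv]; simp)
    apply hv0
    funext i
    have ha := hv1 i
    have hb := hv2 i
    simp only [Pi.neg_apply] at hb
    have : v i = 0 := le_antisymm (by linarith) ha
    simpa using this
  have hU : IsUnit M.det := Ne.isUnit hdet
  set X := M⁻¹ * B with hX
  have hMX : M * X = B := by
    rw [hX, Matrix.mul_nonsing_inv_cancel_left _ _ hU]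
  have hXnn : ∀ i j, 0 ≤ X i j := by
    intro i j
    have := aux_key_nonneg M hMoff p hp hMp (fun i => X i j) (fun i' => by
      have : M.mulVec (fun i => X i j) i' = (M * X) i' j := by
        simp [Matrix.mulVec, dotProduct, Matrix.mul_apply]
      rw [this, hMX]
      exact hB i' j)
    exact this i
  set u := X.mulVec q with hu
  have hMu : M.mulVec u = B.mulVec q := by
    rw [hu, Matrix.mulVec_mulVec, hMX]
  have hup : ∀ i, u i ≤ p i := by
    have := aux_key_nonneg M hMoff p hp hMp (p - u) (fun i => by
      rw [Matrix.mulVec_sub, hMu]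
      have := hMp i
      have h1i := h1 i
      have : M.mulVec p i = -(A.mulVec p i) := by simp [hMdef, Matrix.neg_mulVec]
      simp only [Pi.sub_apply]
      linarith)
    intro i
    have := this i
    simp only [Pi.sub_apply] at this
    linarith
  set E := C * (-A)⁻¹ * B + D with hE
  have hECX : E = C * X + D := by
    rw [hE, hX, hMdef, Matrix.mul_assoc]
  have hEnn : ∀ i j, 0 ≤ E i j := by
    intro i j
    rw [hECX]
    simp only [Matrix.add_apply, Matrix.mul_apply]
    have : 0 ≤ ∑ k, C i k * X k j :=
      Finset.sum_nonneg fun k _ => mul_nonneg (hC i k) (hXnn k j)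
    have := hD i j
    linarith
  have hEq : ∀ j, E.mulVec q j < q j := by
    intro j
    have hEmv : E.mulVec q = C.mulVec u + D.mulVec q := by
      rw [hECX, Matrix.add_mulVec, ← Matrix.mulVec_mulVec, hu]
    have hCu : C.mulVec u j ≤ C.mulVec p j := by
      simp only [Matrix.mulVec, dotProduct]
      apply Finset.sum_le_sum
      intro k _
      exact mul_le_mul_of_nonneg_left (hup k) (hC j k)
    have h2j := h2 j
    have hD1 : (D - 1).mulVec q j = D.mulVec q j - q j := by
      rw [Matrix.sub_mulVec]
      simp [Matrix.one_mulVec]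
    rw [hEmv]
    simp only [Pi.add_apply]
    linarith
  exact aux_spec_lt_one E hEnn q hq hEq
end

section
/- Let A be an n×n Metzler matrix, B ∈ ℝ^{n×m}, C ∈ ℝ^{m×n}, D ∈ ℝ^{m×m} entrywise nonnegative. If ρ(D) < 1 and the matrix A + B(I - D)^{-1}C is Hurwitz stable, then there exist strictly positive vectors p ∈ ℝ^n, q ∈ ℝ^m with Ap + Bq ≺ 0 and Cp + (D - I)q ≺ 0 componentwise. -/
open Filter
open scoped Matrix Pointwise
namespace HurwitzAux
attribute [local instance] Matrix.linftyOpNormedRing Matrix.linftyOpNormedAlgebra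

noncomputable instance matCS {k : ℕ} : CompleteSpace (Matrix (Fin k) (Fin k) ℂ) :=
  inferInstance

lemma norm_entry_le {k : ℕ} (T : Matrix (Fin k) (Fin k) ℂ) (i j : Fin k) :
    ‖T i j‖ ≤ ‖T‖ := by
  have h1 : ‖T i j‖₊ ≤ ∑ j', ‖T i j'‖₊ :=
    Finset.single_le_sum (f := fun j' => ‖T i j'‖₊) (fun _ _ => zero_le) (Finset.mem_univ j)
  have h2 : (∑ j', ‖T i j'‖₊) ≤ ‖T‖₊ := by
    rw [Matrix.linfty_opNNNorm_def]
    exact Finset.le_sup (f := fun i => ∑ j', ‖T i j'‖₊) (Finset.mem_univ i)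
  exact_mod_cast h1.trans h2

lemma map_pow_ofReal {k : ℕ} (E : Matrix (Fin k) (Fin k) ℝ) (N : ℕ) :
    (E ^ N).map Complex.ofReal = (E.map Complex.ofReal) ^ N := by
  induction N with
  | zero => simp [Matrix.map_one]
  | succ N ih =>
    rw [pow_succ, pow_succ, ← ih]
    ext i j
    push_cast [Matrix.map_apply, Matrix.mul_apply]
    rfl

lemma summable_pow_entries {k : ℕ} (E : Matrix (Fin k) (Fin k) ℝ)
    (hs : ∀ μ ∈ spectrum ℂ (E.map Complex.ofReal), ‖μ‖ < 1) :
    ∃ g : ℕ → ℝ, Summable g ∧ (∀ N, 0 ≤ g N) ∧ ∀ N i j, |(E ^ N) i j| ≤ g N := by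
  cases isEmpty_or_nonempty (Fin k) with
  | inl h =>
    exact ⟨fun N => (1/2 : ℝ) ^ N, summable_geometric_of_lt_one (by norm_num) (by norm_num),
      fun N => by positivity, fun N i j => isEmptyElim i⟩
  | inr h =>
    set T := E.map Complex.ofReal with hT
    have hρ : spectralRadius ℂ T < 1 := by
      refine spectrum.spectralRadius_lt_of_forall_lt T fun z hz => ?_
      have h1 : ‖z‖ < 1 := by exact hs z hz
      exact_mod_cast h1
    obtain ⟨c, hc1, hc2⟩ := ENNReal.lt_iff_exists_nnreal_btwn.mp hρ
    have hcR : (c : ℝ) < 1 := by exact_mod_cast hc2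
    have hgel := spectrum.pow_nnnorm_pow_one_div_tendsto_nhds_spectralRadius T
    have hev : ∀ᶠ N : ℕ in atTop, (‖T ^ N‖₊ : ENNReal) ^ (1 / (N:ℝ)) < (c : ENNReal) :=
      hgel.eventually_lt_const hc1
    have hev2 : ∀ᶠ N in atTop, ‖T ^ N‖ ≤ (c : ℝ) ^ N := by
      filter_upwards [hev, eventually_gt_atTop 0] with N hN hN0
      have hNne : (N : ℝ) ≠ 0 := Nat.cast_ne_zero.mpr hN0.ne'
      have h1 : ((‖T ^ N‖₊ : ENNReal) ^ (1 / (N:ℝ))) ^ (N:ℝ) ≤ (c : ENNReal) ^ (N:ℝ) :=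
        ENNReal.rpow_le_rpow hN.le (by positivity)
      rw [← ENNReal.rpow_mul, one_div, inv_mul_cancel₀ hNne, ENNReal.rpow_one,
        ENNReal.rpow_natCast] at h1
      have h2 : ‖T ^ N‖₊ ≤ c ^ N := by exact_mod_cast h1
      calc ‖T ^ N‖ = ((‖T ^ N‖₊ : ℝ)) := rfl
        _ ≤ ((c ^ N : NNReal) : ℝ) := by exact_mod_cast h2
        _ = (c : ℝ) ^ N := by push_cast; ring
    refine ⟨fun N => ‖T ^ N‖, ?_, fun N => norm_nonneg _, ?_⟩
    · refine Summable.of_norm_bounded_eventually_nat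
        (summable_geometric_of_lt_one c.coe_nonneg hcR) ?_
      filter_upwards [hev2] with N hn
      rwa [norm_norm]
    · intro N i j
      have he : (T ^ N) i j = ((E ^ N) i j : ℂ) := by
        rw [hT, ← map_pow_ofReal]; rfl
      calc |(E ^ N) i j| = ‖(T ^ N) i j‖ := by
            rw [he, Complex.norm_real, Real.norm_eq_abs]
        _ ≤ ‖T ^ N‖ := norm_entry_le _ i j


lemma exists_pos_le {ι : Type*} [Finite ι] (F : ι → ℝ) (hF : ∀ i, 0 < F i) :
    ∃ ε : ℝ, 0 < ε ∧ ∀ i, ε ≤ F i := by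
  cases isEmpty_or_nonempty ι with
  | inl h => exact ⟨1, one_pos, fun i => isEmptyElim i⟩
  | inr h =>
    haveI := Fintype.ofFinite ι
    refine ⟨Finset.univ.inf' Finset.univ_nonempty F, ?_,
      fun i => Finset.inf'_le F (Finset.mem_univ i)⟩
    exact (Finset.lt_inf'_iff _).mpr fun i _ => hF i

lemma neumann {k : ℕ} (E : Matrix (Fin k) (Fin k) ℝ) (hE : ∀ i j, 0 ≤ E i j)
    (hs : ∀ μ ∈ spectrum ℂ (E.map Complex.ofReal), ‖μ‖ < 1) :
    ∃ S : Matrix (Fin k) (Fin k) ℝ,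
      (1 - E) * S = 1 ∧ S * (1 - E) = 1 ∧
      ∀ i j, (1 : Matrix (Fin k) (Fin k) ℝ) i j ≤ S i j := by
  obtain ⟨g, hg, hg0, hgb⟩ := summable_pow_entries E hs
  have hEn : ∀ N (i j : Fin k), 0 ≤ (E ^ N) i j := by
    intro N
    induction N with
    | zero => intro i j; rw [pow_zero]; by_cases hij : i = j <;> simp [Matrix.one_apply, hij]
    | succ N ih =>
      intro i j
      rw [pow_succ, Matrix.mul_apply]
      exact Finset.sum_nonneg fun l _ => mul_nonneg (ih _ _) (hE _ _)
  have hsum : ∀ i j, Summable fun N => (E ^ N) i j := fun i j =>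
    Summable.of_norm_bounded hg fun N => by rw [Real.norm_eq_abs]; exact hgb N i j
  set S : Matrix (Fin k) (Fin k) ℝ := Matrix.of (fun i j => ∑' N, (E ^ N) i j) with hS
  have hSapp : ∀ i j, S i j = ∑' N, (E ^ N) i j := fun i j => rfl
  have htel : ∀ i j, (∑' N, ((E ^ N) i j - (E ^ (N+1)) i j)) = (1 : Matrix (Fin k) (Fin k) ℝ) i j := by
    intro i j
    rw [Summable.tsum_sub (hsum i j) ((summable_nat_add_iff 1).mpr (hsum i j)),
      Summable.tsum_eq_zero_add (hsum i j)]
    rw [pow_zero]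
    ring
  have key1 : (1 - E) * S = 1 := by
    ext i j
    rw [Matrix.mul_apply]
    calc ∑ l, (1 - E) i l * S l j
        = ∑ l, ∑' N, (1 - E) i l * (E ^ N) l j := by
          refine Finset.sum_congr rfl fun l _ => ?_
          rw [hSapp, tsum_mul_left]
      _ = ∑' N, ∑ l, (1 - E) i l * (E ^ N) l j :=
          (Summable.tsum_finsetSum fun l _ => (hsum l j).mul_left _).symm
      _ = ∑' N, ((E ^ N) i j - (E ^ (N+1)) i j) := by
          refine tsum_congr fun N => ?_
          rw [← Matrix.mul_apply, sub_mul, one_mul, ← pow_succ']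
          rfl
      _ = (1 : Matrix (Fin k) (Fin k) ℝ) i j := htel i j
  have key2 : S * (1 - E) = 1 := by
    ext i j
    rw [Matrix.mul_apply]
    calc ∑ l, S i l * (1 - E) l j
        = ∑ l, ∑' N, (E ^ N) i l * (1 - E) l j := by
          refine Finset.sum_congr rfl fun l _ => ?_
          rw [hSapp, tsum_mul_right]
      _ = ∑' N, ∑ l, (E ^ N) i l * (1 - E) l j :=
          (Summable.tsum_finsetSum fun l _ => (hsum i l).mul_right _).symm
      _ = ∑' N, ((E ^ N) i j - (E ^ (N+1)) i j) := by
          refine tsum_congr fun N => ?_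
          rw [← Matrix.mul_apply, mul_sub, mul_one, ← pow_succ]
          rfl
      _ = (1 : Matrix (Fin k) (Fin k) ℝ) i j := htel i j
  refine ⟨S, key1, key2, fun i j => ?_⟩
  have h0 := Summable.le_tsum (hsum i j) 0 fun N _ => hEn N i j
  rw [pow_zero] at h0
  exact h0.trans_eq (hSapp i j).symm


lemma metzler_hurwitz {k : ℕ} (M : Matrix (Fin k) (Fin k) ℝ)
    (hM : ∀ i j, i ≠ j → 0 ≤ M i j)
    (hH : ∀ μ ∈ spectrum ℂ (M.map Complex.ofReal), μ.re < 0) :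
    ∃ p : Fin k → ℝ, (∀ i, 0 < p i) ∧ ∀ i, M.mulVec p i < 0 := by
  have hfin : (spectrum ℂ (M.map Complex.ofReal)).Finite := Matrix.finite_spectrum _
  haveI : Finite (spectrum ℂ (M.map Complex.ofReal)) := hfin.to_subtype
  obtain ⟨ε₁, hε₁, hb₁⟩ := exists_pos_le
      (ι := spectrum ℂ (M.map Complex.ofReal))
      (fun ν => (-(ν : ℂ).re) / ((ν : ℂ).re ^ 2 + (ν : ℂ).im ^ 2))
      (fun ν => by
        have hre := hH ν ν.2
        have hd : 0 < (ν : ℂ).re ^ 2 + (ν : ℂ).im ^ 2 := by nlinarith [sq_nonneg (ν : ℂ).im]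
        exact div_pos (by linarith) hd)
  obtain ⟨ε₂, hε₂, hb₂⟩ := exists_pos_le (ι := Fin k)
      (fun i => 1 / (1 + |M i i|)) (fun i => by positivity)
  set h : ℝ := min ε₁ ε₂ with hh
  have hh0 : 0 < h := lt_min hε₁ hε₂
  set P := (1 : Matrix (Fin k) (Fin k) ℝ) + h • M with hP
  have hPe : ∀ i j, 0 ≤ P i j := by
    intro i j
    by_cases hij : i = j
    · subst hij
      have h1 : h ≤ 1 / (1 + |M i i|) := (min_le_right _ _).trans (hb₂ i)
      have h2 : h * (1 + |M i i|) ≤ 1 := by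
        rw [le_div_iff₀ (by positivity)] at h1
        exact h1
      have h3 : -|M i i| ≤ M i i := neg_abs_le _
      have : 0 ≤ 1 + h * M i i := by nlinarith
      simpa [hP, Matrix.add_apply, Matrix.smul_apply, Matrix.one_apply] using this
    · have : 0 ≤ h * M i j := mul_nonneg hh0.le (hM i j hij)
      simpa [hP, Matrix.add_apply, Matrix.smul_apply, Matrix.one_apply, hij] using this
  have hu : ((h : ℂ)) ≠ 0 := by exact_mod_cast hh0.ne'
  have hPs : ∀ μ ∈ spectrum ℂ (P.map Complex.ofReal), ‖μ‖ < 1 := by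
    intro μ hμ
    have e1 : P.map Complex.ofReal =
        algebraMap ℂ (Matrix (Fin k) (Fin k) ℂ) 1 + ((h : ℂ) • (M.map Complex.ofReal)) := by
      rw [map_one]
      ext i j
      by_cases hij : i = j <;>
        simp [hP, Matrix.map_apply, Matrix.add_apply, Matrix.smul_apply, Matrix.one_apply, hij]
    have e3 : spectrum ℂ ((h : ℂ) • (M.map Complex.ofReal))
        = ((h : ℂ) • spectrum ℂ (M.map Complex.ofReal) : Set ℂ) := by
      simpa [Units.smul_def] using
        spectrum.unit_smul_eq_smul (M.map Complex.ofReal) (Units.mk0 (h : ℂ) hu)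
    rw [e1, ← spectrum.singleton_add_eq, e3] at hμ
    obtain ⟨a, ha, b, hb, hab⟩ := Set.mem_add.mp hμ
    rw [Set.mem_singleton_iff] at ha
    obtain ⟨ν, hν, rfl⟩ := hb
    subst ha
    subst hab
    have hre := hH ν hν
    have hd : 0 < ν.re ^ 2 + ν.im ^ 2 := by nlinarith [sq_nonneg ν.im]
    have hb1 : h ≤ (-ν.re) / (ν.re ^ 2 + ν.im ^ 2) := (min_le_left _ _).trans (hb₁ ⟨ν, hν⟩)
    have hh1 : h * (ν.re ^ 2 + ν.im ^ 2) ≤ -ν.re := by rwa [le_div_iff₀ hd] at hb1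
    have habs : ‖1 + (h : ℂ) • ν‖ ^ 2
        = 1 + 2 * h * ν.re + h ^ 2 * (ν.re ^ 2 + ν.im ^ 2) := by
      rw [Complex.sq_norm, Complex.normSq_apply]
      simp [Complex.add_re, Complex.add_im, Complex.smul_re, Complex.smul_im]
      ring
    have h2 : ‖1 + (h : ℂ) • ν‖ ^ 2 < 1 := by nlinarith
    nlinarith [norm_nonneg (1 + (h : ℂ) • ν)]
  obtain ⟨S, h1S, h2S, hSe⟩ := neumann P hPe hPs
  have hSnn : ∀ i j, 0 ≤ S i j := fun i j => le_trans
    (by by_cases hij : i = j <;> simp [Matrix.one_apply, hij]) (hSe i j)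
  have hPM : (1 : Matrix (Fin k) (Fin k) ℝ) - P = (-h) • M := by
    rw [hP, neg_smul]
    abel
  set p := S *ᵥ (fun _ => (1 : ℝ)) with hp
  have hppos : ∀ i, 0 < p i := by
    intro i
    have hpi : p i = ∑ j, S i j * 1 := rfl
    have h1 : S i i * 1 ≤ ∑ j, S i j * 1 :=
      Finset.single_le_sum (f := fun j => S i j * 1)
        (fun j _ => mul_nonneg (hSnn i j) zero_le_one) (Finset.mem_univ i)
    have h2 : (1 : ℝ) ≤ S i i := by
      have := hSe i i
      rwa [Matrix.one_apply_eq] at this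
    rw [hpi]
    nlinarith
  have e : ((1 : Matrix (Fin k) (Fin k) ℝ) - P) *ᵥ p = fun _ => (1 : ℝ) := by
    rw [hp, Matrix.mulVec_mulVec, h1S, Matrix.one_mulVec]
  refine ⟨p, hppos, fun i => ?_⟩
  have e2 : ((-h) • (M *ᵥ p)) i = 1 := by
    rw [← Matrix.smul_mulVec, ← hPM, e]
  have e3 : (-h) * (M *ᵥ p) i = 1 := e2
  have : M.mulVec p i = -(1 / h) := by
    field_simp at e3 ⊢
    linarith
  rw [this]
  have : 0 < 1 / h := by positivity
  linarith

end HurwitzAux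

/-- If `A` is Metzler, `B, C, D` nonnegative, `ρ(D) < 1` and `A + B(I - D)⁻¹C`
is Hurwitz stable, then there exist strictly positive `p, q` with
`Ap + Bq ≺ 0` and `Cp + (D - I)q ≺ 0`. -/
theorem exists_pos_vectors_of_hurwitz
    {n m : ℕ} (A : Matrix (Fin n) (Fin n) ℝ) (B : Matrix (Fin n) (Fin m) ℝ)
    (C : Matrix (Fin m) (Fin n) ℝ) (D : Matrix (Fin m) (Fin m) ℝ)
    (hA : ∀ i j, i ≠ j → 0 ≤ A i j)
    (hB : ∀ i j, 0 ≤ B i j) (hC : ∀ i j, 0 ≤ C i j) (hD : ∀ i j, 0 ≤ D i j)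
    (hρD : ∀ μ ∈ spectrum ℂ (D.map Complex.ofReal), ‖μ‖ < 1)
    (hH : ∀ μ ∈ spectrum ℂ ((A + B * (1 - D)⁻¹ * C).map Complex.ofReal), μ.re < 0) :
    ∃ (p : Fin n → ℝ) (q : Fin m → ℝ),
      (∀ i, 0 < p i) ∧ (∀ j, 0 < q j) ∧
      (∀ i, A.mulVec p i + B.mulVec q i < 0) ∧
      (∀ j, C.mulVec p j + (D - 1).mulVec q j < 0) := by
  obtain ⟨S, h1S, h2S, hSe⟩ := HurwitzAux.neumann D hD hρD
  have hSnn : ∀ i j, 0 ≤ S i j := fun i j => le_trans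
    (by by_cases hij : i = j <;> simp [Matrix.one_apply, hij]) (hSe i j)
  have hinv : (1 - D)⁻¹ = S := Matrix.inv_eq_right_inv h1S
  rw [hinv] at hH
  set M := A + B * S * C with hM
  have hBSnn : ∀ i j, 0 ≤ (B * S) i j := by
    intro i j
    rw [Matrix.mul_apply]
    exact Finset.sum_nonneg fun l _ => mul_nonneg (hB _ _) (hSnn _ _)
  have hMe : ∀ i j, i ≠ j → 0 ≤ M i j := by
    intro i j hij
    have h1 : 0 ≤ (B * S * C) i j := by
      rw [Matrix.mul_apply]
      exact Finset.sum_nonneg fun l _ => mul_nonneg (hBSnn _ _) (hC _ _)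
    have := add_nonneg (hA i j hij) h1
    simpa [hM, Matrix.add_apply] using this
  obtain ⟨p, hp, hMp⟩ := HurwitzAux.metzler_hurwitz M hMe hH
  set w := C *ᵥ p with hw
  have hwnn : ∀ j, 0 ≤ w j := by
    intro j
    have hwj : w j = ∑ l, C j l * p l := rfl
    rw [hwj]
    exact Finset.sum_nonneg fun l _ => mul_nonneg (hC _ _) (hp _).le
  set u := (B * S) *ᵥ (fun _ => (1 : ℝ)) with hu
  have hunn : ∀ i, 0 ≤ u i := by
    intro i
    have hui : u i = ∑ l, (B * S) i l * 1 := rfl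
    rw [hui]
    exact Finset.sum_nonneg fun l _ => mul_nonneg (hBSnn _ _) zero_le_one
  obtain ⟨ε, hε, hεb⟩ := HurwitzAux.exists_pos_le (ι := Fin n)
      (fun i => (-(M *ᵥ p) i) / (1 + u i))
      (fun i => div_pos (neg_pos.mpr (hMp i)) (by have := hunn i; linarith))
  set q := S *ᵥ (fun j => w j + ε) with hq
  have hq_pos : ∀ j, 0 < q j := by
    intro j
    have h1 : S j j * (w j + ε) ≤ ∑ l, S j l * (w l + ε) :=
      Finset.single_le_sum (f := fun l => S j l * (w l + ε))
        (fun l _ => mul_nonneg (hSnn j l) (by have := hwnn l; linarith))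
        (Finset.mem_univ j)
    have h2 : (1 : ℝ) ≤ S j j := by
      have := hSe j j
      rwa [Matrix.one_apply_eq] at this
    have h3 : (0:ℝ) < 1 * ε := by linarith
    have h4 : 1 * ε ≤ S j j * (w j + ε) := by
      have := hwnn j
      nlinarith
    have hqj : q j = ∑ l, S j l * (w l + ε) := rfl
    rw [hqj]
    linarith
  have e : (1 - D) *ᵥ q = fun j => w j + ε := by
    rw [hq, Matrix.mulVec_mulVec, h1S, Matrix.one_mulVec]
  refine ⟨p, q, hp, hq_pos, ?_, ?_⟩
  · -- first inequality
    have hBq : B *ᵥ q = (B * S * C) *ᵥ p + ε • u := by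
      rw [hq, Matrix.mulVec_mulVec]
      have hx : (fun j => w j + ε) = w + ε • (fun _ => (1 : ℝ)) := by
        funext j; simp
      rw [hx, Matrix.mulVec_add, Matrix.mulVec_smul]
      rw [hw, Matrix.mulVec_mulVec, Matrix.mul_assoc]
    intro i
    have e1 : A *ᵥ p + (B * S * C) *ᵥ p = M *ᵥ p := by
      rw [hM, Matrix.add_mulVec]
    have e2 : A.mulVec p i + B.mulVec q i = (M *ᵥ p) i + ε * u i := by
      rw [hBq]
      have := congrFun e1 i
      simp only [Pi.add_apply, Pi.smul_apply, smul_eq_mul] at this ⊢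
      linarith
    rw [e2]
    have hb := hεb i
    have hfi : (-(M *ᵥ p) i) / (1 + u i) * (1 + u i) = -(M *ᵥ p) i :=
      div_mul_cancel₀ _ (by have := hunn i; positivity)
    have h5 : ε * u i ≤ (-(M *ᵥ p) i) / (1 + u i) * u i :=
      mul_le_mul_of_nonneg_right hb (hunn i)
    have h6 : (-(M *ᵥ p) i) / (1 + u i) * u i < (-(M *ᵥ p) i) / (1 + u i) * (1 + u i) := by
      have hFpos : 0 < (-(M *ᵥ p) i) / (1 + u i) :=
        div_pos (neg_pos.mpr (hMp i)) (by have := hunn i; linarith)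
      nlinarith
    linarith
  · -- second inequality
    intro j
    have eD : (D - 1) *ᵥ q = -((1 - D) *ᵥ q) := by
      rw [show D - 1 = -(1 - D) by abel, Matrix.neg_mulVec]
    have e3 : (D - 1).mulVec q j = -(w j + ε) := by
      rw [eD, e]
      simp
    rw [e3]
    show w j + -(w j + ε) < 0
    linarith
end

section
/- Let A be Metzler Hurwitz stable, B nonnegative, q ∈ ℝ^m fixed, and suppose x : [0,∞) → ℝ^n is differentiable with x'(t) ⪯ A x(t) + B q̃(t) componentwise where 0 ⪯ q̃(t) ⪯ q for all t ≥ 0, and x(0) = p. Then x(t) ⪯ -A^{-1}Bq + e^{At}(p + A^{-1}Bq) componentwise for all t ≥ 0, provided p + A^{-1}Bq ⪰ 0. -/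
open Matrix

lemma metzler_nonneg {n : ℕ} (A : Matrix (Fin n) (Fin n) ℝ)
    (hA : ∀ i j, i ≠ j → 0 ≤ A i j)
    (w w' : ℝ → Fin n → ℝ)
    (hw : ∀ t, 0 ≤ t → ∀ i, HasDerivAt (fun s => w s i) (w' t i) t)
    (hww : ∀ t, 0 ≤ t → ∀ i, A.mulVec (w t) i ≤ w' t i)
    (h0 : ∀ i, 0 ≤ w 0 i) :
    ∀ t, 0 ≤ t → ∀ i, 0 ≤ w t i := by
  intro t₀ ht₀ i₀
  set c : ℝ := 1 + ∑ i, ∑ j, |A i j| with hc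
  have hrow : ∀ i, (∑ j, A i j) + 1 ≤ c := by
    intro i
    have h1 : ∑ j, A i j ≤ ∑ j, |A i j| := Finset.sum_le_sum fun j _ => le_abs_self _
    have h2 : ∑ j, |A i j| ≤ ∑ i, ∑ j, |A i j| :=
      Finset.single_le_sum (f := fun i => ∑ j, |A i j|)
        (fun i _ => Finset.sum_nonneg fun j _ => abs_nonneg _) (Finset.mem_univ i)
    simp only [hc]; linarith
  -- main claim: for every ε > 0, the shifted function is positive
  have key : ∀ ε : ℝ, 0 < ε → ∀ t, 0 ≤ t → ∀ i, 0 < w t i + ε * Real.exp (c * t) := by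
    intro ε hε
    by_contra hcon
    push_neg at hcon
    obtain ⟨τ, hτ0, iτ, hiτ⟩ := hcon
    set u : ℝ → Fin n → ℝ := fun t i => w t i + ε * Real.exp (c * t) with hu
    have hu0 : ∀ i, 0 < u 0 i := by
      intro i; have := h0 i
      simp only [hu, mul_zero, Real.exp_zero, mul_one]; linarith
    have hucont : ∀ t, 0 ≤ t → ∀ i, ContinuousAt (fun s => u s i) t := by
      intro t ht i
      exact ((hw t ht i).continuousAt).add
        ((Real.continuous_exp.comp (continuous_const.mul continuous_id)).continuousAt.const_mul ε)
    have huderiv : ∀ t, 0 ≤ t → ∀ i,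
        HasDerivAt (fun s => u s i) (w' t i + ε * (Real.exp (c * t) * c)) t := by
      intro t ht i
      have := (hw t ht i).add ((((hasDerivAt_id t).const_mul c).exp).const_mul ε)
      simp only [mul_one] at this; exact this
    set S : Set ℝ := {s | s ∈ Set.Icc 0 τ ∧ ∃ i, u s i ≤ 0} with hS
    have hSne : S.Nonempty := ⟨τ, ⟨⟨hτ0, le_refl τ⟩, iτ, hiτ⟩⟩
    have hSbdd : BddBelow S := ⟨0, fun s hs => hs.1.1⟩
    set T : ℝ := sInf S with hT
    have hT0 : 0 ≤ T := le_csInf hSne fun s hs => hs.1.1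
    have hTτ : T ≤ τ := csInf_le hSbdd ⟨⟨hτ0, le_refl τ⟩, iτ, hiτ⟩
    -- every point below T and ≥ 0 is positive in all components
    have hpos : ∀ s, 0 ≤ s → s < T → ∀ i, 0 < u s i := by
      intro s hs hsT i
      by_contra h
      push_neg at h
      have : s ∈ S := ⟨⟨hs, hsT.le.trans hTτ⟩, i, h⟩
      exact absurd (csInf_le hSbdd this) (not_le.mpr hsT)
    -- T is in S
    have hTS : ∃ i, u T i ≤ 0 := by
      by_contra h
      push_neg at h
      -- all components positive at T; by continuity positive in a neighborhood
      have hev : ∀ᶠ s in nhds T, ∀ i, 0 < u s i := by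
        rw [Filter.eventually_all]
        intro i
        exact (hucont T hT0 i).eventually (eventually_gt_nhds (h i))
      obtain ⟨δ, hδ, hball⟩ := Metric.eventually_nhds_iff.mp hev
      have hlb : T + δ/2 ≤ T := by
        apply le_csInf hSne
        intro s hs
        by_contra hlt
        push_neg at hlt
        have hsge : T ≤ s := csInf_le hSbdd hs
        have : dist s T < δ := by rw [Real.dist_eq, abs_of_nonneg (by linarith)]; linarith
        obtain ⟨i, hi⟩ := hs.2
        exact absurd (hball this i) (not_lt.mpr hi)
      linarith
    obtain ⟨i, hi⟩ := hTS
    have hTpos : 0 < T := by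
      rcases lt_or_eq_of_le hT0 with h | h
      · exact h
      · exact absurd hi (not_le.mpr (h ▸ hu0 i))
    -- all components at T are ≥ 0 (limit from the left)
    have hTnn : ∀ j, 0 ≤ u T j := by
      intro j
      have htend : Filter.Tendsto (fun s => u s j) (nhdsWithin T (Set.Iio T)) (nhds (u T j)) :=
        ((hucont T hT0 j).continuousWithinAt).tendsto
      refine ge_of_tendsto htend ?_
      filter_upwards [Ioo_mem_nhdsLT_of_mem (Set.mem_Ioc.mpr ⟨hTpos, le_refl T⟩)] with s hs
      exact (hpos s hs.1.le hs.2 j).le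
    have hiz : u T i = 0 := le_antisymm hi (hTnn i)
    -- derivative at T is positive
    have hApos : 0 ≤ ∑ j, A i j * u T j := by
      apply Finset.sum_nonneg
      intro j _
      rcases eq_or_ne j i with rfl | hji
      · rw [hiz, mul_zero]
      · exact mul_nonneg (hA i j (Ne.symm hji)) (hTnn j)
    have hderiv_pos : 0 < w' T i + ε * (Real.exp (c * T) * c) := by
      have h1 : A.mulVec (w T) i ≤ w' T i := hww T hT0 i
      have h2 : A.mulVec (w T) i = ∑ j, A i j * u T j - ε * Real.exp (c * T) * ∑ j, A i j := by
        simp only [Matrix.mulVec, dotProduct, hu]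
        rw [Finset.mul_sum, ← Finset.sum_sub_distrib]
        exact Finset.sum_congr rfl fun j _ => by ring
      have h3 : ∑ j, A i j ≤ c - 1 := by have := hrow i; linarith
      have hexp : 0 < Real.exp (c * T) := Real.exp_pos _
      nlinarith [mul_pos hε hexp]
    -- but derivative at T must be ≤ 0 since u ≥ 0 on [0,T] and u T i = 0
    have hderiv_np : w' T i + ε * (Real.exp (c * T) * c) ≤ 0 := by
      have hd := (huderiv T hT0 i).hasDerivWithinAt (s := Set.Iio T)
      rw [hasDerivWithinAt_iff_tendsto_slope] at hd
      have hne : Set.Iio T \ {T} = Set.Iio T :=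
        Set.diff_singleton_eq_self (fun h => lt_irrefl T h)
      rw [hne] at hd
      refine le_of_tendsto hd ?_
      filter_upwards [Ioo_mem_nhdsLT_of_mem (Set.mem_Ioc.mpr ⟨hTpos, le_refl T⟩)] with s hs
      have hnum : 0 ≤ u s i := (hpos s hs.1.le hs.2 i).le
      have : slope (fun s => u s i) T s = (u s i - u T i) / (s - T) := slope_def_field _ _ _
      rw [this, hiz, sub_zero]
      exact div_nonpos_of_nonneg_of_nonpos hnum (by linarith [hs.2])
    linarith
  -- conclude by letting ε → 0
  by_contra hneg
  push_neg at hneg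
  have hexp : 0 < Real.exp (c * t₀) := Real.exp_pos _
  have hε : 0 < -w t₀ i₀ / Real.exp (c * t₀) := div_pos (by linarith) hexp
  have := key _ hε t₀ ht₀ i₀
  rw [div_mul_cancel₀ _ (ne_of_gt hexp)] at this
  linarith

open Matrix

section aux

lemma expEntryDeriv' {n : ℕ} (A : Matrix (Fin n) (Fin n) ℝ) (t : ℝ) (i j : Fin n) :
    HasDerivAt (fun s : ℝ => NormedSpace.exp (s • A) i j)
      ((A * NormedSpace.exp (t • A)) i j) t := by
  letI : SeminormedRing (Matrix (Fin n) (Fin n) ℝ) := Matrix.linftyOpSemiNormedRing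
  letI : NormedRing (Matrix (Fin n) (Fin n) ℝ) := Matrix.linftyOpNormedRing
  letI : NormedAlgebra ℝ (Matrix (Fin n) (Fin n) ℝ) := Matrix.linftyOpNormedAlgebra
  have h : HasDerivAt (fun s : ℝ => NormedSpace.exp (s • A))
      (A * NormedSpace.exp (t • A)) t := hasDerivAt_exp_smul_const' A t
  let L : Matrix (Fin n) (Fin n) ℝ →ₗ[ℝ] ℝ := Matrix.entryLinearMap ℝ ℝ i j
  have hL := (LinearMap.toContinuousLinearMap L).hasFDerivAt
    (x := NormedSpace.exp (t • A))
  have := hL.comp_hasDerivAt t h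
  exact this

end aux



/-- Comparison principle: a function satisfying the differential inequality
`x' ⪯ A x + B q̃` with `0 ⪯ q̃(t) ⪯ q` and `x(0) = p` is bounded componentwise
by `-A⁻¹Bq + e^{At}(p + A⁻¹Bq)`, provided `p + A⁻¹Bq ⪰ 0`. -/
theorem comparison_bound
    {n m : ℕ} (A : Matrix (Fin n) (Fin n) ℝ) (B : Matrix (Fin n) (Fin m) ℝ)
    (hA : ∀ i j, i ≠ j → 0 ≤ A i j)
    (hAH : ∀ μ ∈ spectrum ℂ (A.map Complex.ofReal), μ.re < 0)
    (hB : ∀ i j, 0 ≤ B i j)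
    (q : Fin m → ℝ) (p : Fin n → ℝ)
    (x : ℝ → Fin n → ℝ) (x' : ℝ → Fin n → ℝ) (qt : ℝ → Fin m → ℝ)
    (hx : ∀ t, 0 ≤ t → HasDerivAt x (x' t) t)
    (hineq : ∀ t, 0 ≤ t → ∀ i, x' t i ≤ A.mulVec (x t) i + B.mulVec (qt t) i)
    (hqt : ∀ t, 0 ≤ t → ∀ j, 0 ≤ qt t j ∧ qt t j ≤ q j)
    (hx0 : x 0 = p)
    (hp : ∀ i, 0 ≤ p i + (A⁻¹ * B).mulVec q i) :
    ∀ t, 0 ≤ t → ∀ i,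
      x t i ≤ (-(A⁻¹ * B)).mulVec q i
        + (NormedSpace.exp (t • A)).mulVec (fun j => p j + (A⁻¹ * B).mulVec q j) i := by
  -- invertibility of A
  have hdet : IsUnit A.det := by
    rw [isUnit_iff_ne_zero]
    intro h
    have hdc : (A.map Complex.ofReal).det = 0 := by
      have : (A.map Complex.ofReal) = Complex.ofRealHom.mapMatrix A := rfl
      rw [this, ← RingHom.map_det, h, map_zero]
    have h0 : (0 : ℂ) ∈ spectrum ℂ (A.map Complex.ofReal) := by
      rw [spectrum.zero_mem_iff, Matrix.isUnit_iff_isUnit_det, hdc, isUnit_iff_ne_zero]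
      simp
    have := hAH 0 h0
    simp at this
  have hAinv : A * A⁻¹ = 1 := Matrix.mul_nonsing_inv A hdet
  set C : Fin n → ℝ := (A⁻¹ * B).mulVec q with hCdef
  set v : Fin n → ℝ := fun j => p j + C j with hvdef
  set z : ℝ → Fin n → ℝ :=
    fun s k => -C k + (NormedSpace.exp (s • A)).mulVec v k with hzdef
  set z' : ℝ → Fin n → ℝ :=
    fun s k => (A * NormedSpace.exp (s • A)).mulVec v k with hz'def
  have hAC : A.mulVec C = B.mulVec q := by
    rw [hCdef, Matrix.mulVec_mulVec, ← Matrix.mul_assoc, hAinv, Matrix.one_mul]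
  have hzderiv : ∀ s : ℝ, ∀ k, HasDerivAt (fun r => z r k) (z' s k) s := by
    intro s k
    have hsum : HasDerivAt (fun r : ℝ => ∑ j, NormedSpace.exp (r • A) k j * v j)
        (∑ j, (A * NormedSpace.exp (s • A)) k j * v j) s :=
      HasDerivAt.fun_sum fun j _ => (expEntryDeriv' A s k j).mul_const (v j)
    have := hsum.const_add (-C k)
    simpa [hzdef, hz'def, Matrix.mulVec, dotProduct] using this
  have hz'eq : ∀ s : ℝ, ∀ k, z' s k = A.mulVec (z s) k + B.mulVec q k := by
    intro s k
    show ((A * NormedSpace.exp (s • A)).mulVec v) k = A.mulVec (z s) k + B.mulVec q k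
    have hzs : z s = (NormedSpace.exp (s • A)).mulVec v - C := by
      funext k
      show -C k + (NormedSpace.exp (s • A)).mulVec v k = _
      simp only [Pi.sub_apply]; ring
    rw [hzs, Matrix.mulVec_sub, hAC, ← Matrix.mulVec_mulVec]
    simp
  -- apply the comparison lemma to w = z - x
  have key := metzler_nonneg A hA (fun s k => z s k - x s k) (fun s k => z' s k - x' s k)
    (fun t ht i => (hzderiv t i).sub ((hasDerivAt_pi.mp (hx t ht)) i))
    (by
      intro t ht i
      have h1 := hineq t ht i
      have h2 : B.mulVec (qt t) i ≤ B.mulVec q i := by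
        simp only [Matrix.mulVec, dotProduct]
        exact Finset.sum_le_sum fun j _ =>
          mul_le_mul_of_nonneg_left ((hqt t ht j).2) (hB i j)
      have h3 : A.mulVec (fun k => z t k - x t k) i
          = A.mulVec (z t) i - A.mulVec (x t) i := by
        have : (fun k => z t k - x t k) = z t - x t := rfl
        rw [this, Matrix.mulVec_sub]; simp
      show A.mulVec (fun k => z t k - x t k) i ≤ z' t i - x' t i
      rw [h3, hz'eq t i]
      linarith)
    (by
      intro i
      have hz0 : z 0 i = p i := by
        show -C i + (NormedSpace.exp ((0:ℝ) • A)).mulVec v i = p i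
        simp only [zero_smul, NormedSpace.exp_zero, Matrix.one_mulVec]
        show -C i + (p i + C i) = p i
        ring
      show 0 ≤ z 0 i - x 0 i
      rw [hz0, hx0]; simp)
  intro t ht i
  have hkey := key t ht i
  have hzti : z t i = -C i + (NormedSpace.exp (t • A)).mulVec v i := rfl
  have hfin : ((-(A⁻¹ * B)).mulVec q) i = -(C i) := by
    rw [Matrix.neg_mulVec, ← hCdef]; simp
  rw [hfin]
  rw [hzti] at hkey
  linarith
end

section
/- Let A be an n×n Metzler Hurwitz stable matrix, B ∈ ℝ^{n×m}, C ∈ ℝ^{m×n}, D ∈ ℝ^{m×m} nonnegative with ρ(D) < 1, and suppose A + B(I-D)^{-1}C is Hurwitz stable. Let ω̄ ∈ ℝ^n, d̄ ∈ ℝ^m be nonnegative. Then the block matrix M = [[A, B],[C, D-I]] is invertible and the vector [η; ς] := -M^{-1}[ω̄; d̄] is nonnegative and satisfies Aη + Bς + ω̄ = 0 and Cη + (D - I)ς + d̄ = 0, i.e., (η, ς) is a nonnegative equilibrium of the coupled differential-difference system with constant disturbances ω̄, d̄. -/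
set_option maxHeartbeats 1000000

open Matrix Filter Topology
open scoped ENNReal NNReal Pointwise

lemma mul_entry_nonneg {k l m' : Type*} [Fintype l] (P : Matrix k l ℝ) (Q : Matrix l m' ℝ)
    (hP : ∀ i j, 0 ≤ P i j) (hQ : ∀ i j, 0 ≤ Q i j) : ∀ i j, 0 ≤ (P * Q) i j := fun i j => by
  rw [Matrix.mul_apply]
  exact Finset.sum_nonneg fun x _ => mul_nonneg (hP i x) (hQ x j)

lemma pow_entry_nonneg {ι : Type*} [Fintype ι] [DecidableEq ι] (N : Matrix ι ι ℝ)
    (hN : ∀ i j, 0 ≤ N i j) : ∀ (k : ℕ) (i j), 0 ≤ (N ^ k) i j := by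
  intro k
  induction k with
  | zero => intro i j; rw [pow_zero, Matrix.one_apply]; split <;> norm_num
  | succ k ih => intro i j; rw [pow_succ]; exact mul_entry_nonneg _ _ ih hN i j

lemma neumann {ι : Type*} [Fintype ι] [DecidableEq ι]
    (N : Matrix ι ι ℝ) (hN : ∀ i j, 0 ≤ N i j) (s : ℝ) (hs : 0 < s)
    (hspec : ∀ μ ∈ spectrum ℂ (N.map Complex.ofReal), ‖μ‖ < s) :
    IsUnit (s • (1 : Matrix ι ι ℝ) - N) ∧ ∀ i j, 0 ≤ (s • (1 : Matrix ι ι ℝ) - N)⁻¹ i j := by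
  letI : NormedRing (Matrix ι ι ℂ) := Matrix.linftyOpNormedRing
  letI : NormedAlgebra ℂ (Matrix ι ι ℂ) := Matrix.linftyOpNormedAlgebra
  haveI : CompleteSpace (Matrix ι ι ℂ) := FiniteDimensional.complete ℂ _
  set T := N.map Complex.ofReal with hT
  have hTpow : ∀ k : ℕ, T ^ k = (N ^ k).map Complex.ofReal := by
    intro k
    have := map_pow (Complex.ofRealHom.mapMatrix (m := ι)) N k
    simp only [RingHom.mapMatrix_apply] at this; exact this.symm
  have hfin : (spectrum ℂ T).Finite := T.finite_spectrum
  obtain ⟨r, hr0, hrs, hr⟩ : ∃ r, 0 ≤ r ∧ r < s ∧ ∀ μ ∈ spectrum ℂ T, ‖μ‖ ≤ r := by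
    rcases (spectrum ℂ T).eq_empty_or_nonempty with h | h
    · exact ⟨0, le_rfl, hs, by simp [h]⟩
    · obtain ⟨μ0, hμ0, hmax⟩ := Set.exists_max_image _ (fun μ : ℂ => ‖μ‖) hfin h
      exact ⟨‖μ0‖, norm_nonneg μ0, hspec μ0 hμ0, hmax⟩
  have hρ : spectralRadius ℂ T ≤ ENNReal.ofReal r := by
    refine iSup₂_le fun μ hμ => ?_
    rw [← ENNReal.ofReal_coe_nnreal, coe_nnnorm]
    exact ENNReal.ofReal_le_ofReal (hr μ hμ)
  obtain ⟨t, htr, hts⟩ : ∃ t, r < t ∧ t < s := ⟨(r + s) / 2, by linarith, by linarith⟩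
  have ht0 : 0 < t := lt_of_le_of_lt hr0 htr
  have hgel := spectrum.pow_nnnorm_pow_one_div_tendsto_nhds_spectralRadius T
  have hev : ∀ᶠ k : ℕ in atTop, (‖T ^ k‖₊ : ℝ≥0∞) ^ (1 / (k : ℝ)) < ENNReal.ofReal t :=
    hgel.eventually_lt_const (lt_of_le_of_lt hρ ((ENNReal.ofReal_lt_ofReal_iff ht0).mpr htr))
  obtain ⟨K, hK⟩ := eventually_atTop.mp (hev.and (eventually_ge_atTop 1))
  have hbound : ∀ k, K ≤ k → ‖T ^ k‖ ≤ t ^ k := by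
    intro k hk
    obtain ⟨hlt, hk1⟩ := hK k hk
    have hk0 : (k : ℝ) ≠ 0 := by positivity
    have h1 : ((‖T ^ k‖₊ : ℝ≥0∞) ^ (1 / (k : ℝ))) ^ (k : ℝ)
        ≤ (ENNReal.ofReal t) ^ (k : ℝ) :=
      ENNReal.rpow_le_rpow hlt.le (by positivity)
    rw [← ENNReal.rpow_mul, one_div, inv_mul_cancel₀ hk0, ENNReal.rpow_one] at h1
    rw [ENNReal.rpow_natCast, ← ENNReal.ofReal_pow ht0.le] at h1
    rw [← ENNReal.ofReal_coe_nnreal, coe_nnnorm] at h1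
    exact (ENNReal.ofReal_le_ofReal_iff (by positivity)).mp h1
  have hentry : ∀ k, K ≤ k → ∀ i j, (N ^ k) i j ≤ t ^ k := by
    intro k hk i j
    have h2 : ‖(T ^ k) i j‖₊ ≤ ‖T ^ k‖₊ := by
      rw [Matrix.linfty_opNNNorm_def]
      calc ‖(T ^ k) i j‖₊ ≤ ∑ j', ‖(T ^ k) i j'‖₊ :=
            Finset.single_le_sum (f := fun j' => ‖(T ^ k) i j'‖₊) (fun _ _ => zero_le) (Finset.mem_univ j)
        _ ≤ _ := Finset.le_sup (f := fun i => ∑ j', ‖(T ^ k) i j'‖₊) (Finset.mem_univ i)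
    have h2' : ‖(T ^ k) i j‖ ≤ ‖T ^ k‖ := h2
    have h3 : (T ^ k) i j = Complex.ofReal ((N ^ k) i j) := by rw [hTpow]; rfl
    rw [h3, Complex.norm_real] at h2'
    exact le_trans (le_abs_self _) (h2'.trans (hbound k hk))
  have hsummable : ∀ i j, Summable (fun k : ℕ => s⁻¹ ^ (k + 1) * (N ^ k) i j) := by
    intro i j
    refine (summable_nat_add_iff K).mp ?_
    have hgsum : Summable (fun k : ℕ => (s⁻¹ ^ (K + 1) * t ^ K) * (t / s) ^ k) :=
      Summable.mul_left _
        (summable_geometric_of_lt_one (by positivity) (by rw [div_lt_one hs]; exact hts))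
    refine Summable.of_nonneg_of_le
      (fun k => mul_nonneg (by positivity) (pow_entry_nonneg N hN _ i j))
      (fun k => ?_) hgsum
    · have hb := hentry (k + K) (Nat.le_add_left K k) i j
      calc s⁻¹ ^ (k + K + 1) * (N ^ (k + K)) i j
          ≤ s⁻¹ ^ (k + K + 1) * t ^ (k + K) :=
            mul_le_mul_of_nonneg_left hb (by positivity)
        _ = (s⁻¹ ^ (K + 1) * t ^ K) * (t / s) ^ k := by
            rw [div_eq_mul_inv]
            ring
  set Sm : Matrix ι ι ℝ := Matrix.of (fun i j => ∑' k : ℕ, s⁻¹ ^ (k + 1) * (N ^ k) i j) with hSmdef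
  have hSm_nonneg : ∀ i j, 0 ≤ Sm i j := fun i j =>
    tsum_nonneg fun k => mul_nonneg (by positivity) (pow_entry_nonneg N hN k i j)
  have hmul : (s • (1 : Matrix ι ι ℝ) - N) * Sm = 1 := by
    ext i j
    rw [Matrix.mul_apply]
    set g : ℕ → ℝ := fun k => s⁻¹ ^ k * (N ^ k) i j with hgdef
    have hgf : (fun k : ℕ => s * (s⁻¹ ^ (k + 1) * (N ^ k) i j)) = g := by
      funext k
      simp only [hgdef, pow_succ]
      field_simp
    have hg : Summable g := by
      rw [← hgf]; exact (hsummable i j).mul_left s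
    have h1 : ∀ l, (s • (1 : Matrix ι ι ℝ) - N) i l * Sm l j
        = ∑' k : ℕ, (s • (1 : Matrix ι ι ℝ) - N) i l * (s⁻¹ ^ (k + 1) * (N ^ k) l j) :=
      fun l => tsum_mul_left.symm
    rw [Finset.sum_congr rfl fun l _ => h1 l,
      ← Summable.tsum_finsetSum fun l _ => ((hsummable l j).mul_left _)]
    have hterm : ∀ k : ℕ, (∑ l, (s • (1 : Matrix ι ι ℝ) - N) i l * (s⁻¹ ^ (k + 1) * (N ^ k) l j))
        = g k - g (k + 1) := by
      intro k
      have h2 : (∑ l, (s • (1 : Matrix ι ι ℝ) - N) i l * (s⁻¹ ^ (k + 1) * (N ^ k) l j))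
          = s⁻¹ ^ (k + 1) * ((s • (1 : Matrix ι ι ℝ) - N) * (N ^ k)) i j := by
        rw [Matrix.mul_apply, Finset.mul_sum]
        exact Finset.sum_congr rfl fun l _ => by ring
      rw [h2, Matrix.sub_mul, Matrix.smul_mul, one_mul, ← pow_succ']
      simp only [Matrix.sub_apply, Matrix.smul_apply, smul_eq_mul, hgdef]
      rw [pow_succ]
      field_simp
    rw [tsum_congr hterm]
    have hgsub : Summable fun k : ℕ => g k - g (k + 1) :=
      hg.sub ((summable_nat_add_iff 1).mpr hg)
    have htel : Tendsto (fun K' => ∑ k ∈ Finset.range K', (g k - g (k + 1))) atTop (𝓝 (g 0)) := by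
      simp only [Finset.sum_range_sub' g]
      simpa using tendsto_const_nhds.sub hg.tendsto_atTop_zero
    have heq : (∑' k : ℕ, (g k - g (k + 1))) = g 0 :=
      tendsto_nhds_unique hgsub.hasSum.tendsto_sum_nat htel
    rw [heq]
    simp [hgdef, Matrix.one_apply]
  have hUnit : IsUnit (s • (1 : Matrix ι ι ℝ) - N) :=
    (Matrix.isUnit_iff_isUnit_det _).mpr (Matrix.isUnit_det_of_right_inverse hmul)
  exact ⟨hUnit, by rw [Matrix.inv_eq_right_inv hmul]; exact hSm_nonneg⟩

lemma metzler_hurwitz {ι : Type*} [Fintype ι] [DecidableEq ι] (X : Matrix ι ι ℝ)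
    (hX : ∀ i j, i ≠ j → 0 ≤ X i j)
    (hspec : ∀ μ ∈ spectrum ℂ (X.map Complex.ofReal), μ.re < 0) :
    IsUnit X ∧ ∀ i j, X⁻¹ i j ≤ 0 := by
  set T := X.map Complex.ofReal with hT
  have hfin : (spectrum ℂ T).Finite := T.finite_spectrum
  obtain ⟨c1, hc1⟩ := (Set.finite_range fun i : ι => -X i i).bddAbove
  obtain ⟨c2, hc2⟩ := (hfin.image fun μ => ‖μ‖ ^ 2 / (2 * -μ.re)).bddAbove
  set s : ℝ := max 1 (max c1 c2 + 1) with hsdef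
  have hs1 : (1 : ℝ) ≤ s := le_max_left _ _
  have hs : 0 < s := lt_of_lt_of_le one_pos hs1
  have hc1s : c1 < s := lt_of_lt_of_le (by linarith [le_max_left c1 c2]) (le_max_right _ _)
  have hc2s : c2 < s := lt_of_lt_of_le (by linarith [le_max_right c1 c2]) (le_max_right _ _)
  set N : Matrix ι ι ℝ := X + s • (1 : Matrix ι ι ℝ) with hNdef
  have hN : ∀ i j, 0 ≤ N i j := by
    intro i j
    rcases eq_or_ne i j with rfl | hij
    · have hXd : -X i i ≤ c1 := hc1 (Set.mem_range_self i)
      simp only [hNdef, Matrix.add_apply, Matrix.smul_apply, Matrix.one_apply_eq, smul_eq_mul,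
        mul_one]
      linarith
    · simp only [hNdef, Matrix.add_apply, Matrix.smul_apply, Matrix.one_apply_ne hij,
        smul_eq_mul, mul_zero, add_zero]
      exact hX i j hij
  have hmapN : N.map Complex.ofReal = algebraMap ℂ (Matrix ι ι ℂ) (s : ℂ) + T := by
    rw [Algebra.algebraMap_eq_smul_one]
    ext i j
    rcases eq_or_ne i j with rfl | hij
    · simp [hNdef, hT, Matrix.map_apply, Matrix.one_apply_eq, add_comm]
    · simp [hNdef, hT, Matrix.map_apply, Matrix.one_apply_ne hij]
  have hσ : spectrum ℂ (N.map Complex.ofReal) = ({((s : ℝ) : ℂ)} : Set ℂ) + spectrum ℂ T := by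
    rw [hmapN]
    exact (spectrum.singleton_add_eq T ((s : ℝ) : ℂ)).symm
  have hspecN : ∀ μ ∈ spectrum ℂ (N.map Complex.ofReal), ‖μ‖ < s := by
    intro μ hμ
    rw [hσ, Set.singleton_add] at hμ
    obtain ⟨lam, hlam, rfl⟩ := hμ
    have hre : lam.re < 0 := hspec lam hlam
    have hq : ‖lam‖ ^ 2 / (2 * -lam.re) ≤ c2 :=
      hc2 (Set.mem_image_of_mem _ hlam)
    have h2re : 0 < 2 * -lam.re := by linarith
    have hq' : ‖lam‖ ^ 2 < s * (2 * -lam.re) :=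
      (div_lt_iff₀ h2re).mp (lt_of_le_of_lt hq hc2s)
    have habs : ‖lam‖ ^ 2 = lam.re ^ 2 + lam.im ^ 2 := by
      rw [Complex.sq_norm, Complex.normSq_apply]; ring
    have h2 : ‖(s : ℂ) + lam‖ ^ 2 < s ^ 2 := by
      rw [Complex.sq_norm, Complex.normSq_apply]
      simp only [Complex.add_re, Complex.add_im, Complex.ofReal_re, Complex.ofReal_im, zero_add]
      nlinarith
    exact lt_of_pow_lt_pow_left₀ 2 hs.le h2
  obtain ⟨hU, hpos⟩ := neumann N hN s hs hspecN
  have hXN : s • (1 : Matrix ι ι ℝ) - N = -X := by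
    ext i j
    simp only [hNdef, Matrix.sub_apply, Matrix.add_apply, Matrix.neg_apply, Matrix.smul_apply,
      smul_eq_mul]
    ring
  rw [hXN] at hU hpos
  have hXU : IsUnit X := by simpa using hU.neg
  refine ⟨hXU, ?_⟩
  have hinv : X⁻¹ = -(-X)⁻¹ := by
    apply Matrix.inv_eq_right_inv
    have hmm := Matrix.mul_nonsing_inv (-X) ((Matrix.isUnit_iff_isUnit_det _).mp hU)
    calc X * -(-X)⁻¹ = (-X) * (-X)⁻¹ := by rw [mul_neg, ← neg_mul]
      _ = 1 := hmm
  rw [hinv]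
  intro i j
  simp only [Matrix.neg_apply, neg_nonpos]
  exact hpos i j

lemma metzler_weight {ι : Type*} [Fintype ι] [DecidableEq ι] (M : Matrix ι ι ℝ)
    (hM : ∀ i j, i ≠ j → 0 ≤ M i j) (v : ι → ℝ) (hv : ∀ i, 0 < v i)
    (hMv : ∀ i, M.mulVec v i < 0) :
    IsUnit M ∧ ∀ i j, M⁻¹ i j ≤ 0 := by
  have key : ∀ z : ι → ℝ, (∀ i, 0 ≤ M.mulVec z i) → ∀ i, z i ≤ 0 := by
    intro z hz
    by_contra hcon
    push_neg at hcon
    obtain ⟨i0, hi0⟩ := hcon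
    haveI : Nonempty ι := ⟨i0⟩
    have hne : (Finset.univ : Finset ι).Nonempty := Finset.univ_nonempty
    set t := Finset.univ.sup' hne (fun i => z i / v i) with htdef
    obtain ⟨i1, -, hi1⟩ := Finset.exists_mem_eq_sup' hne (fun i => z i / v i)
    have htpos : 0 < t :=
      lt_of_lt_of_le (div_pos hi0 (hv i0)) (Finset.le_sup' (f := fun i => z i / v i) (Finset.mem_univ i0))
    have hle : ∀ j, z j ≤ t * v j := by
      intro j
      have h1 : z j / v j ≤ t := Finset.le_sup' (f := fun i => z i / v i) (Finset.mem_univ j)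
      calc z j = (z j / v j) * v j := (div_mul_cancel₀ (z j) (hv j).ne').symm
        _ ≤ t * v j := mul_le_mul_of_nonneg_right h1 (hv j).le
    have heq : z i1 = t * v i1 := by
      rw [htdef.trans hi1]
      exact (div_mul_cancel₀ (z i1) (hv i1).ne').symm
    have hlt : M.mulVec z i1 < 0 := by
      have hb : M.mulVec z i1 ≤ t * M.mulVec v i1 := by
        simp only [Matrix.mulVec, dotProduct]
        rw [Finset.mul_sum]
        refine Finset.sum_le_sum fun j _ => ?_
        rcases eq_or_ne j i1 with rfl | hne'
        · rw [heq]; ring_nf; exact le_rfl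
        · calc M i1 j * z j ≤ M i1 j * (t * v j) :=
                mul_le_mul_of_nonneg_left (hle j) (hM i1 j (Ne.symm hne'))
            _ = t * (M i1 j * v j) := by ring
      exact lt_of_le_of_lt hb (mul_neg_of_pos_of_neg htpos (hMv i1))
    exact absurd (hz i1) (not_le.mpr hlt)
  have hinj : Function.Injective M.mulVec := by
    intro a b hab
    have h0 : M.mulVec (a - b) = 0 := by rw [Matrix.mulVec_sub, hab, sub_self]
    have h0' : M.mulVec (b - a) = 0 := by rw [Matrix.mulVec_sub, hab, sub_self]
    have h1 := key (a - b) (by intro i; rw [h0]; exact le_rfl)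
    have h2 := key (b - a) (by intro i; rw [h0']; exact le_rfl)
    funext i
    have := h1 i
    have := h2 i
    simp only [Pi.sub_apply] at *
    linarith
  have hU : IsUnit M := Matrix.mulVec_injective_iff_isUnit.mp hinj
  refine ⟨hU, fun i j => ?_⟩
  have hdet := (Matrix.isUnit_iff_isUnit_det M).mp hU
  have hz : M.mulVec (M⁻¹.mulVec (Pi.single j 1)) = Pi.single j 1 := by
    rw [Matrix.mulVec_mulVec, Matrix.mul_nonsing_inv _ hdet, Matrix.one_mulVec]
  have hkey := key (M⁻¹.mulVec (Pi.single j 1)) (by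
    rw [hz]
    intro i'
    rcases eq_or_ne i' j with rfl | hij
    · simp
    · simp [Pi.single_apply, hij]) i
  simpa [Matrix.mulVec_single] using hkey

/-- Under the spectral conditions, the block matrix `M = [[A,B],[C,D-I]]` is
invertible and `[η; ς] = -M⁻¹[ω̄; d̄]` is a nonnegative equilibrium of the
coupled differential–difference system with constant disturbances. -/
theorem equilibrium_of_perturbed_cdde
    {n m : ℕ} (A : Matrix (Fin n) (Fin n) ℝ) (B : Matrix (Fin n) (Fin m) ℝ)
    (C : Matrix (Fin m) (Fin n) ℝ) (D : Matrix (Fin m) (Fin m) ℝ)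
    (hA : ∀ i j, i ≠ j → 0 ≤ A i j)
    (hAH : ∀ μ ∈ spectrum ℂ (A.map Complex.ofReal), μ.re < 0)
    (hB : ∀ i j, 0 ≤ B i j) (hC : ∀ i j, 0 ≤ C i j) (hD : ∀ i j, 0 ≤ D i j)
    (hρD : ∀ μ ∈ spectrum ℂ (D.map Complex.ofReal), ‖μ‖ < 1)
    (hH : ∀ μ ∈ spectrum ℂ ((A + B * (1 - D)⁻¹ * C).map Complex.ofReal), μ.re < 0)
    (ωbar : Fin n → ℝ) (dbar : Fin m → ℝ)
    (hω : ∀ i, 0 ≤ ωbar i) (hd : ∀ j, 0 ≤ dbar j) :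
    IsUnit (Matrix.fromBlocks A B C (D - 1)) ∧
    ∀ η : Fin n → ℝ, ∀ ς : Fin m → ℝ,
      (∀ i, η i = -(Matrix.fromBlocks A B C (D - 1))⁻¹.mulVec (Sum.elim ωbar dbar) (Sum.inl i)) →
      (∀ j, ς j = -(Matrix.fromBlocks A B C (D - 1))⁻¹.mulVec (Sum.elim ωbar dbar) (Sum.inr j)) →
      (∀ i, 0 ≤ η i) ∧ (∀ j, 0 ≤ ς j) ∧
      (∀ i, A.mulVec η i + B.mulVec ς i + ωbar i = 0) ∧
      (∀ j, C.mulVec η j + (D - 1).mulVec ς j + dbar j = 0) := by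
  obtain ⟨hDU', hDinv'⟩ := neumann D hD 1 one_pos hρD
  rw [one_smul] at hDU' hDinv'
  have hdetD : IsUnit (1 - D).det := (Matrix.isUnit_iff_isUnit_det _).mp hDU'
  set W := (1 - D)⁻¹ with hWdef
  set H := A + B * W * C with hHdef
  have hHmetz : ∀ i j, i ≠ j → 0 ≤ H i j := by
    intro i j hij
    have h1 : 0 ≤ (B * W * C) i j := mul_entry_nonneg _ _ (mul_entry_nonneg _ _ hB hDinv') hC i j
    simp only [hHdef, Matrix.add_apply]
    exact add_nonneg (hA i j hij) h1
  obtain ⟨hHU, hHinv⟩ := metzler_hurwitz H hHmetz hH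
  have hdetH : IsUnit H.det := (Matrix.isUnit_iff_isUnit_det _).mp hHU
  set one_n : Fin n → ℝ := fun _ => 1 with hone_n
  set p0 : Fin n → ℝ := -(H⁻¹.mulVec one_n) with hp0def
  have hp0 : ∀ i, 0 ≤ p0 i := by
    intro i
    simp only [hp0def, Pi.neg_apply, neg_nonneg, Matrix.mulVec, dotProduct]
    exact Finset.sum_nonpos fun l _ => by simpa [hone_n] using hHinv i l
  have hHp0 : H.mulVec p0 = -one_n := by
    rw [hp0def, Matrix.mulVec_neg, Matrix.mulVec_mulVec, Matrix.mul_nonsing_inv _ hdetH,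
      Matrix.one_mulVec]
  set S1 : ℝ := ∑ i, |H.mulVec one_n i| with hS1
  have hS1nn : 0 ≤ S1 := Finset.sum_nonneg fun i _ => abs_nonneg _
  set ε : ℝ := 1 / (2 * (1 + S1)) with hε
  have hεpos : 0 < ε := by rw [hε]; positivity
  have hεb : ∀ i, ε * H.mulVec one_n i ≤ 1 / 2 := by
    intro i
    have h1 : |H.mulVec one_n i| ≤ S1 :=
      Finset.single_le_sum (f := fun i => |H.mulVec one_n i|) (fun _ _ => abs_nonneg _)
        (Finset.mem_univ i)
    have h2 : ε * H.mulVec one_n i ≤ ε * S1 :=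
      mul_le_mul_of_nonneg_left (le_trans (le_abs_self _) h1) hεpos.le
    have h3 : ε * S1 ≤ 1 / 2 := by
      rw [hε, div_mul_eq_mul_div, one_mul, div_le_div_iff₀ (by positivity) (by norm_num)]
      linarith
    linarith
  set p : Fin n → ℝ := p0 + ε • one_n with hpdef
  have hppos : ∀ i, 0 < p i := by
    intro i
    have := hp0 i
    simp only [hpdef, Pi.add_apply, Pi.smul_apply, hone_n, smul_eq_mul, mul_one]
    linarith
  have hHp : ∀ i, H.mulVec p i ≤ -(1 / 2) := by
    intro i
    rw [hpdef, Matrix.mulVec_add, Matrix.mulVec_smul, hHp0]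
    simp only [Pi.add_apply, Pi.neg_apply, Pi.smul_apply, smul_eq_mul, hone_n]
    have := hεb i
    linarith
  set u : Fin n → ℝ := (B * W).mulVec (fun _ : Fin m => 1) with hudef
  have hu : ∀ i, 0 ≤ u i := by
    intro i
    simp only [hudef, Matrix.mulVec, dotProduct]
    exact Finset.sum_nonneg fun l _ => by
      simpa using mul_entry_nonneg _ _ hB hDinv' i l
  set S2 : ℝ := ∑ i, u i with hS2
  have hS2nn : 0 ≤ S2 := Finset.sum_nonneg fun i _ => hu i
  set δ : ℝ := 1 / (2 * (1 + S2)) with hδ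
  have hδpos : 0 < δ := by rw [hδ]; positivity
  have hδb : ∀ i, δ * u i < 1 / 2 := by
    intro i
    have h1 : u i ≤ S2 := Finset.single_le_sum (f := u) (fun i _ => hu i) (Finset.mem_univ i)
    have h2 : δ * u i ≤ δ * S2 := mul_le_mul_of_nonneg_left h1 hδpos.le
    have h3 : δ * S2 < 1 / 2 := by
      rw [hδ, div_mul_eq_mul_div, one_mul, div_lt_div_iff₀ (by positivity) (by norm_num)]
      linarith
    linarith
  have hCp : ∀ l, 0 ≤ C.mulVec p l := by
    intro l
    simp only [Matrix.mulVec, dotProduct]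
    exact Finset.sum_nonneg fun j _ => mul_nonneg (hC l j) (hppos j).le
  set one_m : Fin m → ℝ := fun _ => 1 with hone_m
  set x : Fin m → ℝ := C.mulVec p + δ • one_m with hxdef
  have hxδ : ∀ l, δ ≤ x l := by
    intro l
    have := hCp l
    simp only [hxdef, Pi.add_apply, Pi.smul_apply, hone_m, smul_eq_mul, mul_one]
    linarith
  have hxpos : ∀ l, 0 ≤ x l := fun l => le_trans hδpos.le (hxδ l)
  set q : Fin m → ℝ := W.mulVec x with hqdef
  have hWjj : ∀ j, 1 ≤ W j j := by
    have hW1 : W * (1 - D) = 1 := Matrix.nonsing_inv_mul _ hdetD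
    have hWid : W = 1 + W * D := by
      have h0 : W * 1 - W * D = 1 := by rw [← Matrix.mul_sub]; exact hW1
      rw [mul_one] at h0
      rw [← h0]
      abel
    intro j
    have h1 : 0 ≤ (W * D) j j := mul_entry_nonneg _ _ hDinv' hD j j
    have h2 : W j j = 1 + (W * D) j j := by
      conv_lhs => rw [hWid]
      simp [Matrix.add_apply, Matrix.one_apply_eq]
    linarith
  have hqpos : ∀ j, 0 < q j := by
    intro j
    have h1 : W j j * x j ≤ q j := by
      simp only [hqdef, Matrix.mulVec, dotProduct]
      exact Finset.single_le_sum (f := fun l => W j l * x l)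
        (fun l _ => mul_nonneg (hDinv' j l) (hxpos l)) (Finset.mem_univ j)
    have h2 : δ ≤ W j j * x j := by nlinarith [hWjj j, hxδ j, hδpos]
    linarith
  have hrow2 : ∀ j, C.mulVec p j + (D - 1).mulVec q j = -δ := by
    intro j
    have h1 : (D - 1 : Matrix (Fin m) (Fin m) ℝ) = -(1 - D) := (neg_sub _ _).symm
    have h2 : (1 - D).mulVec q = x := by
      rw [hqdef, Matrix.mulVec_mulVec, Matrix.mul_nonsing_inv _ hdetD, Matrix.one_mulVec]
    have h3 : (D - 1).mulVec q = -x := by rw [h1, Matrix.neg_mulVec, h2]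
    rw [h3]
    simp only [hxdef, Pi.neg_apply, Pi.add_apply, Pi.smul_apply, hone_m, smul_eq_mul, mul_one]
    ring
  have hrow1 : ∀ i, A.mulVec p i + B.mulVec q i < 0 := by
    intro i
    have hBq : B.mulVec q = (B * W * C).mulVec p + δ • u := by
      rw [hqdef, Matrix.mulVec_mulVec, hxdef, Matrix.mulVec_add, Matrix.mulVec_smul,
        Matrix.mulVec_mulVec, hudef]
    have h4 : A.mulVec p i + B.mulVec q i = H.mulVec p i + δ * u i := by
      rw [hBq]
      simp only [hHdef, Matrix.add_mulVec, Pi.add_apply, Pi.smul_apply, smul_eq_mul]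
      ring
    rw [h4]
    have := hHp i
    have := hδb i
    linarith
  set Mb := Matrix.fromBlocks A B C (D - 1) with hMb
  have hMetz : ∀ i j, i ≠ j → 0 ≤ Mb i j := by
    intro i j hij
    rcases i with i | i <;> rcases j with j | j
    · simp only [hMb, Matrix.fromBlocks_apply₁₁]
      exact hA i j fun h => hij (congrArg Sum.inl h)
    · simp only [hMb, Matrix.fromBlocks_apply₁₂]
      exact hB i j
    · simp only [hMb, Matrix.fromBlocks_apply₂₁]
      exact hC i j
    · have hij' : i ≠ j := fun h => hij (congrArg Sum.inr h)
      simp only [hMb, Matrix.fromBlocks_apply₂₂, Matrix.sub_apply, Matrix.one_apply_ne hij',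
        sub_zero]
      exact hD i j
  set v := Sum.elim p q with hv
  have hvpos : ∀ k, 0 < v k := by
    intro k
    rcases k with i | j
    · exact hppos i
    · exact hqpos j
  have hMv : ∀ k, Mb.mulVec v k < 0 := by
    intro k
    rw [hMb, hv, Matrix.fromBlocks_mulVec]
    rcases k with i | j
    · simpa using hrow1 i
    · simp only [Sum.elim_inr, Pi.add_apply, Sum.elim_comp_inl, Sum.elim_comp_inr]
      have := hrow2 j
      linarith
  obtain ⟨hMU, hMinv⟩ := metzler_weight Mb hMetz v hvpos hMv
  refine ⟨hMU, ?_⟩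
  intro η ς hη hς
  have hb : ∀ k, 0 ≤ Sum.elim ωbar dbar k := by
    intro k
    rcases k with i | j
    · exact hω i
    · exact hd j
  have hMinvb : ∀ k, Mb⁻¹.mulVec (Sum.elim ωbar dbar) k ≤ 0 := by
    intro k
    simp only [Matrix.mulVec, dotProduct]
    exact Finset.sum_nonpos fun l _ => mul_nonpos_iff.mpr (Or.inr ⟨hMinv k l, hb l⟩)
  have hηn : ∀ i, 0 ≤ η i := fun i => by
    rw [hη i]
    simpa using neg_nonneg.mpr (hMinvb (Sum.inl i))
  have hςn : ∀ j, 0 ≤ ς j := fun j => by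
    rw [hς j]
    simpa using neg_nonneg.mpr (hMinvb (Sum.inr j))
  have hvec : Sum.elim η ς = -(Mb⁻¹.mulVec (Sum.elim ωbar dbar)) := by
    funext k
    rcases k with i | j
    · simpa using hη i
    · simpa using hς j
  have hdetM := (Matrix.isUnit_iff_isUnit_det _).mp hMU
  have hMid : Mb.mulVec (Sum.elim η ς) = -(Sum.elim ωbar dbar) := by
    rw [hvec, Matrix.mulVec_neg, Matrix.mulVec_mulVec, Matrix.mul_nonsing_inv _ hdetM,
      Matrix.one_mulVec]
  rw [hMb, Matrix.fromBlocks_mulVec] at hMid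
  refine ⟨hηn, hςn, ?_, ?_⟩
  · intro i
    have h5 := congrFun hMid (Sum.inl i)
    simp only [Sum.elim_inl, Pi.add_apply, Pi.neg_apply, Sum.elim_comp_inl, Sum.elim_comp_inr] at h5
    linarith
  · intro j
    have h5 := congrFun hMid (Sum.inr j)
    simp only [Sum.elim_inr, Pi.add_apply, Pi.neg_apply, Sum.elim_comp_inl, Sum.elim_comp_inr] at h5
    linarith
end
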